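/- Let η ∈ ℝ and let Q ∈ Sym₀(3) with v_min(Q) > −1/3 and |Q|² > η, and suppose Λ ∈ Sym₀(3) maximises the dual objective λ ↦ D(Q,λ,η) over Sym₀(3). Then every eigenvector of Q is an eigenvector of Λ: if e ∈ S² and Qe = μe for some μ ∈ ℝ, then there is ν ∈ ℝ with Λe = νe. -/

import Mathlib

/-
Common setting for the formalisation of
"An analysis of equilibria in dense nematic liquid crystals" (J. M. Taylor).

* `V3` is ℝ³ (as a Euclidean space), `sph` is the unit sphere S²,
  and `μS` is the 2-dimensional Hausdorff (surface) measure restricted to S².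
* `IsProb f` says `f ∈ P(S²)`.
* `FE f η` is the free energy `F(f,η) ∈ ℝ ∪ {+∞}` (realised as `EReal`),
  with the conventions `0 ln 0 = 0`, `0 ⬝ (+∞) = 0` and `-ln x = +∞` for `x ≤ 0`:
  the value is the real integral whenever the argument of the logarithm is a.e.
  positive on `{f ≠ 0}` and the integrand is integrable, and `+∞` otherwise.
-/

open MeasureTheory Matrix Filter
open scoped ENNReal Topology Classical

noncomputable section

abbrev V3 : Type := EuclideanSpace ℝ (Fin 3)

/-- The unit sphere S² in ℝ³. -/
def sph : Set V3 := Metric.sphere (0 : V3) 1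

/-- The 2-dimensional Hausdorff (surface) measure on S². -/
def μS : Measure V3 := (μH[2]).restrict sph

abbrev Mat3 : Type := Matrix (Fin 3) (Fin 3) ℝ

/-- Membership in Sym₀(3): real symmetric traceless 3×3 matrices. -/
def Sym0 (Q : Mat3) : Prop := Q.IsSymm ∧ Q.trace = 0

/-- The Frobenius inner product `A·B = trace (A*B)` (on symmetric matrices). -/
def mdot (A B : Mat3) : ℝ := (A * B).trace

/-- The quadratic form `p ↦ Qp·p`. -/
def qf (Q : Mat3) (p : V3) : ℝ := ∑ i, ∑ j, Q i j * p i * p j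

/-- The smallest eigenvalue of a symmetric matrix, via Rayleigh quotients on S². -/
def vmin (Q : Mat3) : ℝ := ⨅ p : sph, qf Q (p : V3)

/-- `f ∈ P(S²)`. -/
def IsProb (f : V3 → ℝ) : Prop :=
  Integrable f μS ∧ (∀ᵐ p ∂μS, 0 ≤ f p) ∧ ∫ p, f p ∂μS = 1

/-- The interaction term `p ↦ ∫_{S²} ((p·q)² − 1/3) f(q) dq`. -/
def Kf (f : V3 → ℝ) (p : V3) : ℝ :=
  ∫ q, ((∑ i, p i * q i) ^ 2 - 1 / 3) * f q ∂μS

/-- The free energy `F(f,η) ∈ ℝ ∪ {+∞}`. -/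
def FE (f : V3 → ℝ) (η : ℝ) : EReal :=
  if (∀ᵐ p ∂μS, f p ≠ 0 → η < Kf f p) ∧
      Integrable (fun p => f p * Real.log (f p) - f p * Real.log (Kf f p - η)) μS
  then ((∫ p, f p * Real.log (f p) - f p * Real.log (Kf f p - η) ∂μS : ℝ) : EReal)
  else ⊤

/-- The Q-tensor `Q(f) = ∫_{S²} (p⊗p − (1/3)I) f(p) dp`. -/
def Qten (f : V3 → ℝ) : Mat3 :=
  Matrix.of fun i j => ∫ p, f p * (p i * p j - if i = j then (1 : ℝ) / 3 else 0) ∂μS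

/-- The macroscopic energy `J(Q,η) = inf_{f ∈ A(Q)} F(f,η)` (`= +∞` when `A(Q) = ∅`). -/
def Jfun (Q : Mat3) (η : ℝ) : EReal :=
  sInf {y : EReal | ∃ f : V3 → ℝ, IsProb f ∧ Qten f = Q ∧ FE f η = y}

/-- The dual objective `D(Q,λ,η) = λ·Q − ln ∫_{S²} exp(λp·p) max(Qp·p − η, 0) dp`. -/
def Dob (Q lam : Mat3) (η : ℝ) : ℝ :=
  mdot lam Q - Real.log (∫ p, Real.exp (qf lam p) * max (qf Q p - η) 0 ∂μS)

/-- The effective domain of `J(·,η)`. -/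
def domJ (η : ℝ) : Set Mat3 :=
  {Q : Mat3 | Sym0 Q ∧ -(1/3) < vmin Q ∧ η < mdot Q Q}

/-- The matrix `∫_{S²} (f(p)/(Qp·p − η)) (p⊗p − (1/3)I) dp` (integrand `0` where `f` vanishes,
by the junk-value conventions of division in Lean). -/
def Mmat (f : V3 → ℝ) (Q : Mat3) (η : ℝ) : Mat3 :=
  Matrix.of fun i j =>
    ∫ p, f p / (qf Q p - η) * (p i * p j - if i = j then (1 : ℝ) / 3 else 0) ∂μS

/-- The entropy `∫_{S²} f ln f ∈ ℝ ∪ {+∞}`. -/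
def EntE (f : V3 → ℝ) : EReal :=
  if Integrable (fun p => f p * Real.log (f p)) μS
  then ((∫ p, f p * Real.log (f p) ∂μS : ℝ) : EReal)
  else ⊤

/-- The Ball–Majumdar singular potential `ψ_s(Q) = inf_{f ∈ A(Q)} ∫ f ln f`. -/
def psiS (Q : Mat3) : EReal :=
  sInf {y : EReal | ∃ f : V3 → ℝ, IsProb f ∧ Qten f = Q ∧ EntE f = y}

/-- `f` is an `L^p`-local minimiser of `F(·,η)`. -/
def LpLocMin (pp : ℝ≥0∞) (η : ℝ) (f : V3 → ℝ) : Prop :=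
  FE f η < ⊤ ∧ ∃ ε : ℝ, 0 < ε ∧ ∀ g : V3 → ℝ, IsProb g →
    eLpNorm (g - f) pp μS < ENNReal.ofReal ε → FE f η ≤ FE g η

instance : Coe (Fin 3 → ℝ) V3 := ⟨WithLp.toLp 2⟩

lemma mem_sph_iff (p : V3) : p ∈ sph ↔ ∑ i, (p i)^2 = 1 := by
  rw [sph, mem_sphere_iff_norm, sub_zero, EuclideanSpace.norm_eq]
  simp only [Real.norm_eq_abs, sq_abs]
  constructor
  · intro h
    have h0 : 0 ≤ ∑ i, (p i)^2 := Finset.sum_nonneg fun i _ => sq_nonneg _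
    nlinarith [Real.sq_sqrt h0, Real.sqrt_nonneg (∑ i, (p i)^2)]
  · intro h; rw [h]; exact Real.sqrt_one

lemma isCompact_sph : IsCompact sph := isCompact_sphere 0 1

lemma measurableSet_sph : MeasurableSet sph := Metric.isClosed_sphere.measurableSet

lemma cos_diff_le (a b : ℝ) : |Real.cos a - Real.cos b| ≤ |a - b| := by
  rw [Real.cos_sub_cos]
  have h1 : |Real.sin ((a+b)/2)| ≤ 1 := Real.abs_sin_le_one _
  have h2 : |Real.sin ((a-b)/2)| ≤ |(a-b)/2| := Real.abs_sin_le_abs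
  rw [abs_mul, abs_mul]
  have : |(a-b)/2| = |a-b|/2 := by rw [abs_div]; norm_num
  rw [this] at h2
  have h3 : (0:ℝ) ≤ |Real.sin ((a - b) / 2)| := abs_nonneg _
  have h4 : (0:ℝ) ≤ |a-b| := abs_nonneg _
  calc |(-2:ℝ)| * |Real.sin ((a+b)/2)| * |Real.sin ((a-b)/2)|
      ≤ 2 * 1 * (|a-b|/2) := by
        rw [abs_neg, abs_two]
        apply mul_le_mul (by nlinarith) h2 h3 (by positivity)
    _ = |a - b| := by ring

lemma sin_diff_le (a b : ℝ) : |Real.sin a - Real.sin b| ≤ |a - b| := by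
  rw [Real.sin_sub_sin]
  have h1 : |Real.cos ((a+b)/2)| ≤ 1 := Real.abs_cos_le_one _
  have h2 : |Real.sin ((a-b)/2)| ≤ |(a-b)/2| := Real.abs_sin_le_abs
  rw [abs_mul, abs_mul]
  have h5 : |(a-b)/2| = |a-b|/2 := by rw [abs_div]; norm_num
  rw [h5] at h2
  have h3 : (0:ℝ) ≤ |Real.sin ((a - b) / 2)| := abs_nonneg _
  have h4 : (0:ℝ) ≤ |a-b| := abs_nonneg _
  calc |(2:ℝ)| * |Real.sin ((a-b)/2)| * |Real.cos ((a+b)/2)|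
      ≤ 2 * (|a-b|/2) * 1 := by
        rw [abs_two]
        apply mul_le_mul (by nlinarith) h1 (abs_nonneg _) (by positivity)
    _ = |a - b| := by ring

def gmap : (Fin 2 → ℝ) → V3 := fun u => WithLp.toLp 2 (fun i =>
  if i = 0 then Real.cos (u 0) * Real.sin (u 1)
  else if i = 1 then Real.sin (u 0) * Real.sin (u 1)
  else Real.cos (u 1))

lemma gmap_comp_le (u v : Fin 2 → ℝ) (i : Fin 3) :
    |gmap u i - gmap v i| ≤ 2 * dist u v := by
  have hD : ∀ j : Fin 2, |u j - v j| ≤ dist u v := fun j => by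
    simpa [Real.dist_eq] using dist_le_pi_dist u v j
  have hd0 : (0:ℝ) ≤ dist u v := dist_nonneg
  have hmul : ∀ a b c d : ℝ, |a| ≤ 1 → |d| ≤ 1 → |a*b - c*d| ≤ |b - d| + |a - c| := by
    intro a b c d ha hd
    have : a*b - c*d = a*(b-d) + d*(a-c) := by ring
    rw [this]
    calc |a*(b-d) + d*(a-c)| ≤ |a*(b-d)| + |d*(a-c)| := abs_add_le _ _
      _ ≤ |b-d| + |a-c| := by
          rw [abs_mul, abs_mul]
          have h1 : |a| * |b-d| ≤ 1 * |b-d| := mul_le_mul_of_nonneg_right ha (abs_nonneg _)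
          have h2 : |d| * |a-c| ≤ 1 * |a-c| := mul_le_mul_of_nonneg_right hd (abs_nonneg _)
          nlinarith [abs_nonneg (b-d), abs_nonneg (a-c)]
  fin_cases i <;> simp only [gmap] <;> norm_num
  · calc |Real.cos (u 0) * Real.sin (u 1) - Real.cos (v 0) * Real.sin (v 1)|
        ≤ |Real.sin (u 1) - Real.sin (v 1)| + |Real.cos (u 0) - Real.cos (v 0)| :=
          hmul _ _ _ _ (Real.abs_cos_le_one _) (Real.abs_sin_le_one _)
      _ ≤ |u 1 - v 1| + |u 0 - v 0| := add_le_add (sin_diff_le _ _) (cos_diff_le _ _)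
      _ ≤ dist u v + dist u v := add_le_add (hD 1) (hD 0)
      _ = 2 * dist u v := by ring
  · calc |Real.sin (u 0) * Real.sin (u 1) - Real.sin (v 0) * Real.sin (v 1)|
        ≤ |Real.sin (u 1) - Real.sin (v 1)| + |Real.sin (u 0) - Real.sin (v 0)| :=
          hmul _ _ _ _ (Real.abs_sin_le_one _) (Real.abs_sin_le_one _)
      _ ≤ |u 1 - v 1| + |u 0 - v 0| := add_le_add (sin_diff_le _ _) (sin_diff_le _ _)
      _ ≤ dist u v + dist u v := add_le_add (hD 1) (hD 0)
      _ = 2 * dist u v := by ring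
  · calc |Real.cos (u 1) - Real.cos (v 1)| ≤ |u 1 - v 1| := cos_diff_le _ _
      _ ≤ dist u v := hD 1
      _ ≤ 2 * dist u v := by nlinarith

lemma gmap_lip : LipschitzWith 4 gmap := by
  apply LipschitzWith.of_dist_le_mul
  intro u v
  have hd0 : (0:ℝ) ≤ dist u v := dist_nonneg
  rw [EuclideanSpace.dist_eq]
  have hb : ∑ i, dist (gmap u i) (gmap v i) ^ 2 ≤ (4 * dist u v)^2 := by
    have : ∀ i : Fin 3, dist (gmap u i) (gmap v i) ^ 2 ≤ (2 * dist u v)^2 := by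
      intro i
      have := gmap_comp_le u v i
      rw [Real.dist_eq]
      nlinarith [abs_nonneg (gmap u i - gmap v i)]
    calc ∑ i, dist (gmap u i) (gmap v i) ^ 2 ≤ ∑ _i : Fin 3, (2 * dist u v)^2 :=
          Finset.sum_le_sum fun i _ => this i
      _ = 3 * (2 * dist u v)^2 := by rw [Fin.sum_univ_three]; ring
      _ ≤ (4 * dist u v)^2 := by nlinarith
  have hfin : Real.sqrt (∑ i, dist (gmap u i) (gmap v i) ^ 2) ≤ 4 * dist u v := by
    calc Real.sqrt (∑ i, dist (gmap u i) (gmap v i) ^ 2) ≤ Real.sqrt ((4 * dist u v)^2) :=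
          Real.sqrt_le_sqrt hb
      _ = 4 * dist u v := Real.sqrt_sq (by positivity)
  simpa using hfin

lemma gmap_surj : sph ⊆ gmap '' Metric.closedBall 0 7 := by
  intro p hp
  have hsum : ∑ i, (p i)^2 = 1 := (mem_sph_iff p).1 hp
  have hsum3 : (p 0)^2 + (p 1)^2 + (p 2)^2 = 1 := by
    rw [← hsum, Fin.sum_univ_three]
  have hp2 : -1 ≤ p 2 ∧ p 2 ≤ 1 := by constructor <;> nlinarith
  set φ := Real.arccos (p 2) with hφ
  have hcosφ : Real.cos φ = p 2 := Real.cos_arccos hp2.1 hp2.2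
  have hsinφ : Real.sin φ = Real.sqrt ((p 0)^2 + (p 1)^2) := by
    rw [hφ, Real.sin_arccos]
    congr 1; nlinarith
  have hφmem : |φ| ≤ 7 := by
    rw [abs_of_nonneg (Real.arccos_nonneg _)]
    calc Real.arccos (p 2) ≤ Real.pi := Real.arccos_le_pi _
      _ ≤ 7 := by nlinarith [Real.pi_le_four]
  by_cases hs : (p 0)^2 + (p 1)^2 = 0
  · have h0 : p 0 = 0 := by nlinarith
    have h1 : p 1 = 0 := by nlinarith
    have hsin0 : Real.sin φ = 0 := by rw [hsinφ, hs, Real.sqrt_zero]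
    refine ⟨fun j => if j = 0 then 0 else φ, ?_, ?_⟩
    · rw [Metric.mem_closedBall, dist_pi_le_iff (by norm_num)]
      intro j
      fin_cases j
      · simp [Real.dist_eq]
      · simpa [Real.dist_eq] using hφmem
    · ext i
      fin_cases i
      · simpa [gmap, hsin0] using h0.symm
      · simpa [gmap, hsin0] using h1.symm
      · simpa [gmap] using hcosφ
  · set z : ℂ := ⟨p 0, p 1⟩ with hz
    have hzne : z ≠ 0 := by
      intro h
      apply hs
      have h0 : p 0 = 0 := by simpa [hz, Complex.ext_iff] using congrArg Complex.re h
      have h1 : p 1 = 0 := by simpa [hz, Complex.ext_iff] using congrArg Complex.im h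
      rw [h0, h1]; ring
    have habs : ‖z‖ = Real.sqrt ((p 0)^2 + (p 1)^2) := by
      rw [Complex.norm_def, Complex.normSq_mk]; ring_nf
    set θ := Complex.arg z with hθ
    have hcosθ : Real.cos θ = p 0 / ‖z‖ := Complex.cos_arg hzne
    have hsinθ : Real.sin θ = p 1 / ‖z‖ := Complex.sin_arg z
    have habspos : 0 < ‖z‖ := by
      rw [habs]
      apply Real.sqrt_pos.2
      rcases lt_or_eq_of_le (by positivity : (0:ℝ) ≤ (p 0)^2 + (p 1)^2) with h | h
      · exact h
      · exact absurd h.symm hs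
    have hsin_abs : Real.sin φ = ‖z‖ := by rw [hsinφ, habs]
    refine ⟨fun j => if j = 0 then θ else φ, ?_, ?_⟩
    · rw [Metric.mem_closedBall, dist_pi_le_iff (by norm_num)]
      intro j
      fin_cases j
      · simp only [Real.dist_eq]
        norm_num
        rw [abs_le]
        constructor
        · nlinarith [Complex.neg_pi_lt_arg z, Real.pi_le_four]
        · nlinarith [Complex.arg_le_pi z, Real.pi_le_four]
      · simpa [Real.dist_eq] using hφmem
    · ext i
      fin_cases i
      · show Real.cos _ * Real.sin _ = _
        simp only [gmap, if_pos, if_neg]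
        norm_num
        rw [hsin_abs, hcosθ]
        field_simp
      · simp only [gmap]
        norm_num
        rw [hsin_abs, hsinθ]
        field_simp
      · simpa [gmap] using hcosφ

lemma hausdorff2_pi_eq_volume : (μH[2] : Measure (Fin 2 → ℝ)) = volume := by
  have := MeasureTheory.hausdorffMeasure_pi_real (ι := Fin 2)
  simpa using this

lemma muS_univ_lt_top : μS Set.univ < ⊤ := by
  rw [μS, Measure.restrict_apply_univ]
  have h1 : μH[(2:ℝ)] sph ≤ μH[(2:ℝ)] (gmap '' Metric.closedBall 0 7) :=
    measure_mono gmap_surj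
  have h2 := gmap_lip.hausdorffMeasure_image_le (by norm_num : (0:ℝ) ≤ 2)
      (Metric.closedBall 0 7)
  have h3 : (μH[(2:ℝ)] : Measure (Fin 2 → ℝ)) (Metric.closedBall 0 7) < ⊤ := by
    rw [hausdorff2_pi_eq_volume]
    exact (isCompact_closedBall 0 7).measure_lt_top
  refine lt_of_le_of_lt (h1.trans h2) ?_
  exact ENNReal.mul_lt_top (ENNReal.rpow_lt_top_of_nonneg (by norm_num) (by simp)) h3

instance : IsFiniteMeasure μS := ⟨muS_univ_lt_top⟩

lemma coord_le_dist (p q : V3) (k : Fin 3) : |p k - q k| ≤ dist p q := by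
  rw [EuclideanSpace.dist_eq]
  have h1 : |p k - q k| = Real.sqrt (dist (p k) (q k) ^ 2) := by
    rw [Real.sqrt_sq_eq_abs, Real.dist_eq, abs_abs]
  rw [h1]
  apply Real.sqrt_le_sqrt
  exact Finset.single_le_sum (f := fun i => dist (p i) (q i) ^ 2) (fun i _ => sq_nonneg _) (Finset.mem_univ k)

def pimap (i : Fin 3) : V3 → (Fin 2 → ℝ) := fun p j => p (i.succAbove j)

lemma pimap_lip (i : Fin 3) : LipschitzWith 1 (pimap i) := by
  apply LipschitzWith.of_dist_le_mul
  intro p q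
  simp only [NNReal.coe_one, one_mul]
  rw [dist_pi_le_iff dist_nonneg]
  intro j
  rw [Real.dist_eq]
  exact coord_le_dist p q (i.succAbove j)

def gr (i : Fin 3) (ε : ℝ) : (Fin 2 → ℝ) → V3 := fun u =>
  WithLp.toLp 2 (i.insertNth (ε * Real.sqrt (1 - ∑ j, (u j)^2)) u)

lemma cont_coord (k : Fin 3) : Continuous fun p : V3 => p k :=
  (continuous_apply k).comp (PiLp.continuous_ofLp 2 (fun _ : Fin 3 => ℝ))

lemma gr_cont (i : Fin 3) (ε : ℝ) : Continuous (gr i ε) := by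
  have hpi : Continuous fun u : Fin 2 → ℝ => (i.insertNth (ε * Real.sqrt (1 - ∑ j, (u j)^2)) u : Fin 3 → ℝ) := by
    apply continuous_pi
    intro k
    rcases eq_or_ne k i with rfl | hk
    · simp only [Fin.insertNth_apply_same]
      exact continuous_const.mul (Real.continuous_sqrt.comp (by continuity))
    · obtain ⟨j, rfl⟩ := Fin.exists_succAbove_eq hk
      simp only [Fin.insertNth_apply_succAbove]
      exact continuous_apply j
  exact (PiLp.continuous_toLp 2 (fun _ : Fin 3 => ℝ)).comp hpi

lemma pimap_gr (i : Fin 3) (ε : ℝ) (u : Fin 2 → ℝ) : pimap i (gr i ε u) = u := by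
  funext j
  simp [pimap, gr, Fin.insertNth_apply_succAbove]

lemma sum_sq_split (i : Fin 3) (p : V3) :
    ∑ k, (p k)^2 = (p i)^2 + ∑ j, (p (i.succAbove j))^2 :=
  Fin.sum_univ_succAbove (fun k => (p k)^2) i

lemma gr_mem_sph (i : Fin 3) {ε : ℝ} (hε : ε = 1 ∨ ε = -1) {u : Fin 2 → ℝ}
    (hu : ∑ j, (u j)^2 ≤ 1) : gr i ε u ∈ sph := by
  rw [mem_sph_iff]
  rw [sum_sq_split i]
  have h1 : ((gr i ε u : V3) i) = ε * Real.sqrt (1 - ∑ j, (u j)^2) := by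
    simp [gr, Fin.insertNth_apply_same]
  have h2 : ∀ j, (gr i ε u : V3) (i.succAbove j) = u j := by
    intro j; simp [gr, Fin.insertNth_apply_succAbove]
  rw [h1]
  simp only [h2]
  have hsq : Real.sqrt (1 - ∑ j, (u j)^2) ^ 2 = 1 - ∑ j, (u j)^2 :=
    Real.sq_sqrt (by linarith)
  have hε2 : ε^2 = 1 := by rcases hε with rfl | rfl <;> norm_num
  rw [mul_pow, hε2, hsq]; ring

lemma gr_pimap (i : Fin 3) {ε : ℝ} (hε : ε = 1 ∨ ε = -1) {p : V3}
    (hp : p ∈ sph) (hsign : 0 < ε * p i) : gr i ε (pimap i p) = p := by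
  have hsum : ∑ k, (p k)^2 = 1 := (mem_sph_iff p).1 hp
  have hs : ∑ j, (pimap i p j)^2 = 1 - (p i)^2 := by
    have := sum_sq_split i p
    simp only [pimap]
    linarith
  ext k
  rcases eq_or_ne k i with rfl | hk
  · show (gr k ε (pimap k p) : V3) k = p k
    have h1 : (gr k ε (pimap k p) : V3) k = ε * Real.sqrt (1 - ∑ j, (pimap k p j)^2) := by
      simp [gr, Fin.insertNth_apply_same]
    rw [h1, hs]
    have : Real.sqrt ((p k)^2) = |p k| := Real.sqrt_sq_eq_abs _
    rw [show (1 - (1 - (p k)^2)) = (p k)^2 by ring, this]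
    have hε2 : ε^2 = 1 := by rcases hε with rfl | rfl <;> norm_num
    have habs : |p k| = ε * p k := by
      rw [← abs_of_pos hsign, abs_mul]
      have : |ε| = 1 := by rcases hε with rfl | rfl <;> norm_num
      rw [this, one_mul]
    rw [habs]; linear_combination p k * hε2
  · obtain ⟨j, rfl⟩ := Fin.exists_succAbove_eq hk
    show (gr i ε (pimap i p) : V3) (i.succAbove j) = p (i.succAbove j)
    simp [gr, Fin.insertNth_apply_succAbove, pimap]

lemma muS_open_pos {W : Set V3} (hW : IsOpen W) {p₀ : V3} (hp₀ : p₀ ∈ W) (hps : p₀ ∈ sph) :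
    0 < μS W := by
  have hsum : ∑ k, (p₀ k)^2 = 1 := (mem_sph_iff p₀).1 hps
  -- choose a big coordinate
  have hex : ∃ i : Fin 3, 1/3 ≤ (p₀ i)^2 := by
    by_contra h
    push_neg at h
    have h0 := h 0; have h1 := h 1; have h2 := h 2
    rw [Fin.sum_univ_three] at hsum
    nlinarith
  obtain ⟨i, hi⟩ := hex
  set ε : ℝ := if 0 < p₀ i then 1 else -1 with hεdef
  have hε : ε = 1 ∨ ε = -1 := by
    rcases lt_or_ge 0 (p₀ i) with h | h
    · left; simp [hεdef, h]
    · right; simp [hεdef, not_lt.2 h]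
  have hεp : 1/2 < ε * p₀ i := by
    have hne : p₀ i ≠ 0 := by intro h; rw [h] at hi; norm_num at hi
    have habs : ε * p₀ i = |p₀ i| := by
      rcases lt_or_ge 0 (p₀ i) with h | h
      · rw [hεdef, if_pos h, one_mul, abs_of_pos h]
      · have hlt : p₀ i < 0 := lt_of_le_of_ne h hne
        rw [hεdef, if_neg (not_lt.2 h), abs_of_neg hlt]; ring
    rw [habs]
    nlinarith [abs_nonneg (p₀ i), sq_abs (p₀ i)]
  set T : Set V3 := W ∩ {p : V3 | 1/2 < ε * p i} with hT
  have hTopen : IsOpen T := hW.inter (isOpen_lt continuous_const (continuous_const.mul (cont_coord i)))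
  have hp₀T : p₀ ∈ T := ⟨hp₀, hεp⟩
  set U2 : Set (Fin 2 → ℝ) := (gr i ε)⁻¹' T ∩ {u | ∑ j, (u j)^2 < 1} with hU2
  have hU2open : IsOpen U2 := by
    apply IsOpen.inter ((gr_cont i ε).isOpen_preimage T hTopen)
    exact isOpen_lt (by continuity) continuous_const
  have hmem : pimap i p₀ ∈ U2 := by
    constructor
    · show gr i ε (pimap i p₀) ∈ T
      rw [gr_pimap i hε hps (by linarith)]
      exact hp₀T
    · show ∑ j, (pimap i p₀ j)^2 < 1
      have := sum_sq_split i p₀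
      have hpos : 0 < (p₀ i)^2 := by nlinarith
      simp only [pimap]
      nlinarith
  have hsub : U2 ⊆ pimap i '' (T ∩ sph) := by
    rintro u ⟨hu1, hu2⟩
    refine ⟨gr i ε u, ⟨hu1, gr_mem_sph i hε (le_of_lt hu2)⟩, pimap_gr i ε u⟩
  -- measures
  have hvol : (0:ℝ≥0∞) < volume U2 := hU2open.measure_pos volume ⟨pimap i p₀, hmem⟩
  have h1 : volume U2 = μH[(2:ℝ)] U2 := by rw [hausdorff2_pi_eq_volume]
  have h2 : μH[(2:ℝ)] U2 ≤ μH[(2:ℝ)] (pimap i '' (T ∩ sph)) := measure_mono hsub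
  have h3 : μH[(2:ℝ)] (pimap i '' (T ∩ sph)) ≤ μH[(2:ℝ)] (T ∩ sph) := by
    have := (pimap_lip i).hausdorffMeasure_image_le (by norm_num : (0:ℝ) ≤ 2) (T ∩ sph)
    simpa using this
  have h4 : μH[(2:ℝ)] (T ∩ sph) ≤ μH[(2:ℝ)] (W ∩ sph) :=
    measure_mono (Set.inter_subset_inter_left sph Set.inter_subset_left)
  have h5 : μS W = μH[(2:ℝ)] (W ∩ sph) := Measure.restrict_apply hW.measurableSet
  rw [h5]
  calc (0:ℝ≥0∞) < volume U2 := hvol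
    _ = μH[(2:ℝ)] U2 := h1
    _ ≤ μH[(2:ℝ)] (pimap i '' (T ∩ sph)) := h2
    _ ≤ μH[(2:ℝ)] (T ∩ sph) := h3
    _ ≤ μH[(2:ℝ)] (W ∩ sph) := h4

lemma integrable_cont {f : V3 → ℝ} (hf : Continuous f) : Integrable f μS := by
  obtain ⟨C, hC⟩ := isCompact_sph.exists_bound_of_continuousOn hf.continuousOn
  refine ⟨hf.aestronglyMeasurable, ?_⟩
  apply HasFiniteIntegral.of_bounded (C := C)
  have hae : ∀ᵐ p ∂μS, p ∈ sph := ae_restrict_mem measurableSet_sph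
  filter_upwards [hae] with p hp
  exact hC p hp

lemma integral_pos {f : V3 → ℝ} (hf : Continuous f) (h0 : ∀ p, 0 ≤ f p)
    {p₀ : V3} (hp₀ : p₀ ∈ sph) (hpos : 0 < f p₀) : 0 < ∫ p, f p ∂μS := by
  have hae : 0 ≤ᵐ[μS] f := Filter.Eventually.of_forall h0
  have hint : Integrable f μS := integrable_cont hf
  have key : 0 < μH[(2:ℝ)] (Function.support f ∩ sph) := by
    have hWopen : IsOpen {p : V3 | 0 < f p} := isOpen_lt continuous_const hf
    have hsub : {p : V3 | 0 < f p} ∩ sph ⊆ Function.support f ∩ sph := by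
      rintro p ⟨h1, h2⟩
      exact ⟨ne_of_gt h1, h2⟩
    have := muS_open_pos hWopen (show p₀ ∈ {p : V3 | 0 < f p} from hpos) hp₀
    rw [show μS {p : V3 | 0 < f p} = μH[(2:ℝ)] ({p : V3 | 0 < f p} ∩ sph) from
      Measure.restrict_apply hWopen.measurableSet] at this
    exact lt_of_lt_of_le this (measure_mono hsub)
  have := (setIntegral_pos_iff_support_of_nonneg_ae (μ := μH[2]) (s := sph) hae hint).2 key
  exact this

lemma cont_eq_zero_of_integral_zero {f : V3 → ℝ} (hf : Continuous f) (h0 : ∀ p, 0 ≤ f p)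
    (hz : ∫ p, f p ∂μS = 0) : ∀ p ∈ sph, f p = 0 := by
  intro p hp
  by_contra hne
  have hpos : 0 < f p := lt_of_le_of_ne (h0 p) (Ne.symm hne)
  exact absurd hz (ne_of_gt (integral_pos hf h0 hp hpos))

def bf (A : Mat3) (x y : Fin 3 → ℝ) : ℝ := ∑ i, ∑ j, A i j * x i * y j

lemma qf_dot (A : Mat3) (x : Fin 3 → ℝ) : qf A x = x ⬝ᵥ (A *ᵥ x) := by
  simp only [qf, dotProduct, Matrix.mulVec, Fin.sum_univ_three]
  ring

lemma qf_cont (A : Mat3) : Continuous fun p : V3 => qf A p := by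
  unfold qf
  apply continuous_finset_sum; intro i _
  apply continuous_finset_sum; intro j _
  exact (continuous_const.mul (cont_coord i)).mul (cont_coord j)

lemma qf_mulVec (A R : Mat3) (hR : R.IsSymm) (x : Fin 3 → ℝ) :
    qf A (R.mulVec x) = qf (R*A*R) x := by
  rw [qf_dot, qf_dot, Matrix.mulVec_mulVec, Matrix.dotProduct_mulVec,
    Matrix.dotProduct_mulVec]
  congr 1
  have h1 : x ᵥ* (R * A * R) = ((x ᵥ* R) ᵥ* A) ᵥ* R := by
    rw [← Matrix.vecMul_vecMul, ← Matrix.vecMul_vecMul]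
  have h2 : x ᵥ* R = R *ᵥ x := by rw [← hR.eq, Matrix.vecMul_transpose, hR.eq]
  rw [h1, h2, ← Matrix.vecMul_vecMul]

lemma qf_comb (A : Mat3) (x y : Fin 3 → ℝ) (t : ℝ) :
    qf A (fun k => x k + t * y k) =
      qf A x + t * (bf A x y + bf A y x) + t^2 * qf A y := by
  simp only [qf, bf, Fin.sum_univ_three]
  ring

lemma qf_smul_arg (A : Mat3) (s : ℝ) (x : Fin 3 → ℝ) :
    qf A (fun k => s * x k) = s^2 * qf A x := by
  simp only [qf, Fin.sum_univ_three]; ring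

/-- if a symmetric matrix's quadratic form vanishes everywhere, it is zero -/
lemma symm_qf_zero (B : Mat3) (hB : B.IsSymm) (hall : ∀ u : Fin 3 → ℝ, qf B u = 0) :
    B = 0 := by
  have hdiag : ∀ i, B i i = 0 := by
    intro i
    have := hall (fun k => if k = i then 1 else 0)
    fin_cases i <;> simpa [qf, Fin.sum_univ_three] using this
  ext i j
  have h1 := hdiag i
  have h2 := hdiag j
  have h3 := hall (fun k => if k = i then 1 else if k = j then 1 else 0)
  have hs := hB.apply i j
  fin_cases i <;> fin_cases j <;>
    simp only [qf, Fin.sum_univ_three] at h3 <;>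
    simp_all <;> linarith

/-- Vanishing of a quadratic form on an open piece of the sphere forces the matrix to vanish -/
lemma quad_zero (B Q : Mat3) (η : ℝ) (hB : B.IsSymm)
    {p₀ : V3} (hp₀ : p₀ ∈ sph) (hη : η < qf Q p₀)
    (hz : ∀ p : V3, p ∈ sph → η < qf Q p → qf B p = 0) : B = 0 := by
  apply symm_qf_zero B hB
  intro u
  have hsum : ∑ k, (p₀ k)^2 = 1 := (mem_sph_iff p₀).1 hp₀
  -- auxiliary quadratics in t
  set n : ℝ → ℝ := fun t => ∑ k, (p₀ k + t * u k)^2 with hn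
  have hn0 : n 0 = 1 := by rw [hn]; simpa using hsum
  set gfun : ℝ → ℝ := fun t => qf Q (fun k => p₀ k + t * u k) - η * n t with hg
  have hg0 : 0 < gfun 0 := by
    have : (fun k => p₀ k + 0 * u k) = fun k => p₀ k := by funext k; ring
    rw [hg]
    simp only [this, hn0]
    have : qf Q (fun k => p₀ k) = qf Q p₀ := rfl
    rw [this]; linarith
  have hncont : Continuous n := by
    rw [hn]; apply continuous_finset_sum; intro k _; continuity
  have hgcont : Continuous gfun := by
    rw [hg]
    apply Continuous.sub _ (continuous_const.mul hncont)
    have : (fun t => qf Q (fun k => p₀ k + t * u k)) =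
        fun t => qf Q p₀ + t * (bf Q p₀ u + bf Q u p₀) + t^2 * qf Q u := by
      funext t; rw [qf_comb]
    rw [this]; continuity
  -- an open set around 0
  have hopen : IsOpen {t : ℝ | 0 < gfun t ∧ 0 < n t} :=
    (isOpen_lt continuous_const hgcont).inter (isOpen_lt continuous_const hncont)
  have h0mem : (0:ℝ) ∈ {t : ℝ | 0 < gfun t ∧ 0 < n t} := ⟨hg0, by rw [hn0]; norm_num⟩
  obtain ⟨δ, hδpos, hδ⟩ := Metric.isOpen_iff.1 hopen 0 h0mem
  -- key: for t in the ball, qf B (p₀ + t u) = 0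
  have hkey : ∀ t : ℝ, |t| < δ → qf B (fun k => p₀ k + t * u k) = 0 := by
    intro t ht
    have htmem : t ∈ {t : ℝ | 0 < gfun t ∧ 0 < n t} := by
      apply hδ; simpa [Real.dist_eq] using ht
    obtain ⟨hgt, hnt⟩ := htmem
    set s : ℝ := (Real.sqrt (n t))⁻¹ with hsdef
    have hsn : Real.sqrt (n t) > 0 := Real.sqrt_pos.2 hnt
    have hspos : 0 < s := inv_pos.2 hsn
    have hs2 : s^2 * n t = 1 := by
      rw [hsdef]
      rw [← Real.sq_sqrt (le_of_lt hnt)]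
      field_simp
      rw [Real.sqrt_sq (Real.sqrt_nonneg _)]
    -- normalized point on sphere
    set z : V3 := WithLp.toLp 2 (fun k => s * (p₀ k + t * u k)) with hzdef
    have hzs : z ∈ sph := by
      rw [mem_sph_iff]
      have : ∀ k, (z k)^2 = s^2 * (p₀ k + t * u k)^2 := by intro k; rw [hzdef]; simp only [PiLp.toLp_apply]; ring
      calc ∑ k, (z k)^2 = ∑ k, s^2 * (p₀ k + t * u k)^2 := Finset.sum_congr rfl (fun k _ => this k)
        _ = s^2 * n t := by rw [hn, Finset.mul_sum]
        _ = 1 := hs2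
    have hzq : η < qf Q z := by
      have hq : qf Q z = s^2 * qf Q (fun k => p₀ k + t * u k) := qf_smul_arg Q s _
      have hgt' : η * n t < qf Q (fun k => p₀ k + t * u k) := by
        rw [hg] at hgt; dsimp at hgt; linarith
      have hfin : η = s^2 * (η * n t) := by
        rw [← mul_assoc]
        rw [show s^2 * η * n t = η * (s^2 * n t) by ring, hs2, mul_one]
      rw [hq, hfin]
      apply mul_lt_mul_of_pos_left hgt' (by positivity)
    have := hz z hzs hzq
    have hqz : qf B z = s^2 * qf B (fun k => p₀ k + t * u k) := qf_smul_arg B s _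
    rw [hqz] at this
    have hs2ne : s^2 ≠ 0 := by positivity
    exact (mul_eq_zero.1 this).resolve_left hs2ne
  -- extract coefficients
  have e0 := hkey 0 (by simpa using hδpos)
  have e1 := hkey (δ/2) (by rw [abs_of_pos (by linarith)]; linarith)
  have e2 := hkey (-(δ/2)) (by rw [abs_of_neg (by linarith)]; linarith)
  rw [qf_comb] at e0 e1 e2
  have hδne : (δ/2) ≠ 0 := by positivity
  have hX : (δ/2)^2 * qf B u = 0 := by nlinarith [e0, e1, e2]
  exact (mul_eq_zero.1 hX).resolve_left (pow_ne_zero 2 hδne)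

section Reflection

def Pm (e : Fin 3 → ℝ) : Mat3 := Matrix.vecMulVec e e
def Rm (e : Fin 3 → ℝ) : Mat3 := Pm e + Pm e - 1

lemma Pm_symm (e : Fin 3 → ℝ) : (Pm e).IsSymm := by
  unfold Matrix.IsSymm
  ext i j
  simp only [Pm, Matrix.vecMulVec_apply, Matrix.transpose_apply]
  ring

lemma Rm_symm (e : Fin 3 → ℝ) : (Rm e).IsSymm := by
  unfold Matrix.IsSymm
  rw [Rm, Matrix.transpose_sub, Matrix.transpose_add, (Pm_symm e).eq, Matrix.transpose_one]

lemma Pm_mul_Pm (e : Fin 3 → ℝ) (hsum : ∑ i, e i ^ 2 = 1) : Pm e * Pm e = Pm e := by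
  ext i j
  rw [Matrix.mul_apply]
  simp only [Pm, Matrix.vecMulVec_apply]
  have : ∀ k : Fin 3, (e i * e k) * (e k * e j) = (e i * e j) * (e k)^2 := fun k => by ring
  rw [Finset.sum_congr rfl (fun k _ => this k), ← Finset.mul_sum, hsum, mul_one]

lemma Rm_mul_Rm (e : Fin 3 → ℝ) (hsum : ∑ i, e i ^ 2 = 1) : Rm e * Rm e = 1 := by
  have h2 : Rm e * Rm e =
      (Pm e * Pm e + Pm e * Pm e + Pm e * Pm e + Pm e * Pm e)
        - (Pm e + Pm e + Pm e + Pm e) + 1 := by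
    rw [Rm]; noncomm_ring
  rw [h2, Pm_mul_Pm e hsum]
  abel

lemma Pm_mulVec (e y : Fin 3 → ℝ) : Pm e *ᵥ y = (e ⬝ᵥ y) • e := by
  funext i
  simp only [Matrix.mulVec, Pm, Matrix.vecMulVec_apply, dotProduct, Pi.smul_apply,
    smul_eq_mul, Fin.sum_univ_three]
  ring

lemma Rm_mulVec_e (e : Fin 3 → ℝ) (hsum : ∑ i, e i ^ 2 = 1) : Rm e *ᵥ e = e := by
  have hd : e ⬝ᵥ e = 1 := by
    simp only [dotProduct]
    rw [← hsum]
    apply Finset.sum_congr rfl; intros; ring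
  rw [Rm, Matrix.sub_mulVec, Matrix.add_mulVec, Pm_mulVec, hd, Matrix.one_mulVec, one_smul]
  funext i
  simp

end Reflection

section MP
variable (R : Mat3)

def Rv (R : Mat3) : V3 → V3 := fun p => WithLp.toLp 2 (R.mulVec p)

lemma dot_self_mulVec (hsym : R.IsSymm) (hRR : R * R = 1) (x : Fin 3 → ℝ) :
    (R *ᵥ x) ⬝ᵥ (R *ᵥ x) = x ⬝ᵥ x := by
  rw [Matrix.dotProduct_mulVec]
  have h2 : (R *ᵥ x) ᵥ* R = x := by
    rw [← hsym.eq, Matrix.vecMul_transpose, Matrix.mulVec_mulVec, hsym.eq, hRR,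
      Matrix.one_mulVec]
  rw [h2]

lemma norm_Rv (hsym : R.IsSymm) (hRR : R * R = 1) (x : V3) : ‖Rv R x‖ = ‖x‖ := by
  rw [EuclideanSpace.norm_eq, EuclideanSpace.norm_eq]
  congr 1
  have h1 : ∀ y : V3, ∑ i, ‖y i‖^2 = y ⬝ᵥ y := by
    intro y
    simp only [Real.norm_eq_abs, sq_abs, dotProduct]
    apply Finset.sum_congr rfl; intros; ring
  rw [h1, h1]
  exact dot_self_mulVec R hsym hRR x

lemma Rv_isometry (hsym : R.IsSymm) (hRR : R * R = 1) : Isometry (Rv R) := by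
  apply Isometry.of_dist_eq
  intro p q
  rw [dist_eq_norm, dist_eq_norm]
  have h1 : Rv R p - Rv R q = Rv R (p - q) := by
    show WithLp.toLp 2 (R *ᵥ p.ofLp) - WithLp.toLp 2 (R *ᵥ q.ofLp) = WithLp.toLp 2 (R *ᵥ (p - q).ofLp)
    rw [WithLp.ofLp_sub, Matrix.mulVec_sub, WithLp.toLp_sub]
  rw [h1, norm_Rv R hsym hRR]

lemma Rv_invol (hRR : R * R = 1) (p : V3) : Rv R (Rv R p) = p := by
  show WithLp.toLp 2 (R *ᵥ (R *ᵥ p.ofLp)) = p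
  rw [Matrix.mulVec_mulVec, hRR, Matrix.one_mulVec]

def RvIso (hsym : R.IsSymm) (hRR : R * R = 1) : V3 ≃ᵢ V3 where
  toFun := Rv R
  invFun := Rv R
  left_inv := Rv_invol R hRR
  right_inv := Rv_invol R hRR
  isometry_toFun := Rv_isometry R hsym hRR

lemma Rv_pre_sph (hsym : R.IsSymm) (hRR : R * R = 1) : Rv R ⁻¹' sph = sph := by
  ext p
  simp only [Set.mem_preimage, sph, mem_sphere_iff_norm, sub_zero]
  rw [norm_Rv R hsym hRR]

lemma Rv_measurePreserving (hsym : R.IsSymm) (hRR : R * R = 1) :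
    MeasurePreserving (Rv R) μS μS := by
  have hiso := RvIso R hsym hRR
  have hmeas : Measurable (Rv R) := (Rv_isometry R hsym hRR).continuous.measurable
  constructor
  · exact hmeas
  · show Measure.map (Rv R) ((μH[2]).restrict sph) = (μH[2]).restrict sph
    have h1 : (μH[(2:ℝ)] : Measure V3).restrict sph
        = ((Measure.map (Rv R) μH[2]).restrict sph) := by
      have := (RvIso R hsym hRR).map_hausdorffMeasure (d := 2)
      rw [show ⇑(RvIso R hsym hRR) = Rv R from rfl] at this
      rw [this]
    conv_rhs => rw [h1, Measure.restrict_map hmeas measurableSet_sph, Rv_pre_sph R hsym hRR]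

lemma integral_comp_Rv (hsym : R.IsSymm) (hRR : R * R = 1) (g : V3 → ℝ) :
    ∫ p, g (Rv R p) ∂μS = ∫ p, g p ∂μS := by
  apply (Rv_measurePreserving R hsym hRR).integral_comp
    (RvIso R hsym hRR).toHomeomorph.measurableEmbedding

end MP

/-- if `Λ` maximises the dual objective `D(Q,·,η)` over `Sym₀(3)`,
then every (unit) eigenvector of `Q` is an eigenvector of `Λ`. -/
theorem stmt_10 (η : ℝ) (Q Λ : Mat3) (hQ : Sym0 Q)
    (hvmin : -(1/3) < vmin Q) (hnorm : η < mdot Q Q)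
    (hΛ : Sym0 Λ) (hmax : ∀ lam : Mat3, Sym0 lam → Dob Q lam η ≤ Dob Q Λ η) :
    ∀ e : Fin 3 → ℝ, (∑ i, e i ^ 2) = 1 →
      ∀ μ : ℝ, Q.mulVec e = μ • e → ∃ ν : ℝ, Λ.mulVec e = ν • e := by
  intro e hsum μ hQe
  classical
  set w : V3 → ℝ := fun p => max (qf Q p - η) 0 with hw
  have hwnn : ∀ p, 0 ≤ w p := fun p => le_max_right _ _
  have hwcont : Continuous w :=
    Continuous.max ((qf_cont Q).sub continuous_const) continuous_const
  -- `mdot Q Q` is a sum of squares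
  have hQQsq : mdot Q Q = ∑ i, ∑ k, (Q i k)^2 := by
    simp only [mdot, Matrix.trace, Matrix.diag, Matrix.mul_apply]
    apply Finset.sum_congr rfl; intro i _
    apply Finset.sum_congr rfl; intro k _
    rw [hQ.1.apply i k]; ring
  -- there is a point on the sphere with qf Q p > η
  have hplus : ∃ p : V3, p ∈ sph ∧ η < qf Q p := by
    by_contra hc
    push_neg at hc
    have hzero : ∀ lam : Mat3,
        (∫ p, Real.exp (qf lam p) * max (qf Q p - η) 0 ∂μS) = 0 := by
      intro lam
      apply integral_eq_zero_of_ae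
      filter_upwards [ae_restrict_mem measurableSet_sph] with p hp
      have h1 := hc p hp
      rw [max_eq_right (by linarith), mul_zero]
      rfl
    have hD : ∀ lam : Mat3, Dob Q lam η = mdot lam Q := by
      intro lam; rw [Dob, hzero, Real.log_zero, sub_zero]
    rcases eq_or_lt_of_le (show 0 ≤ mdot Q Q by rw [hQQsq]; positivity) with h0 | h0
    · -- Q = 0, contradiction with hc at e
      have hQ0 : Q = 0 := by
        have hsq : ∑ i, ∑ k, (Q i k)^2 = 0 := by rw [← hQQsq, ← h0]
        ext i k
        have h1 := (Finset.sum_eq_zero_iff_of_nonneg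
          (fun i _ => Finset.sum_nonneg fun k _ => sq_nonneg (Q i k))).1 hsq i (Finset.mem_univ i)
        have h2 := (Finset.sum_eq_zero_iff_of_nonneg (fun k _ => sq_nonneg (Q i k))).1 h1 k
          (Finset.mem_univ k)
        have h3 : Q i k = 0 := sq_eq_zero_iff.1 h2
        simpa using h3
      have he : (e : V3) ∈ sph := (mem_sph_iff e).2 hsum
      have hqe : qf Q e = 0 := by simp [qf, hQ0]
      have := hc e he
      rw [hqe] at this
      rw [← h0] at hnorm
      linarith
    · set t : ℝ := (mdot Λ Q + 1)/(mdot Q Q) with ht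
      have hSym : Sym0 (t • Q) := by
        constructor
        · unfold Matrix.IsSymm
          rw [Matrix.transpose_smul, hQ.1.eq]
        · rw [Matrix.trace_smul, hQ.2, smul_zero]
      have hle := hmax (t • Q) hSym
      rw [hD, hD] at hle
      have hm : mdot (t • Q) Q = t * mdot Q Q := by
        rw [mdot, mdot, Matrix.smul_mul, Matrix.trace_smul, smul_eq_mul]
      rw [hm, ht] at hle
      rw [div_mul_cancel₀ _ (ne_of_gt h0)] at hle
      linarith
  obtain ⟨p₀, hp₀s, hp₀q⟩ := hplus
  -- reflection setup
  set R : Mat3 := Rm e with hRdef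
  have hRsym : R.IsSymm := Rm_symm e
  have hRR : R * R = 1 := Rm_mul_Rm e hsum
  have hQec : ∀ i, ∑ k, Q i k * e k = μ * e i := by
    intro i
    have := congrFun hQe i
    simpa [Matrix.mulVec, dotProduct, Pi.smul_apply, smul_eq_mul] using this
  have hPQ : Pm e * Q = μ • Pm e := by
    ext i j
    rw [Matrix.mul_apply]
    simp only [Pm, Matrix.vecMulVec_apply, Matrix.smul_apply, smul_eq_mul]
    have h1 : ∀ k, (e i * e k) * Q k j = e i * (Q j k * e k) := by
      intro k; rw [hQ.1.apply j k]; ring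
    rw [Finset.sum_congr rfl fun k _ => h1 k, ← Finset.mul_sum, hQec j]
    ring
  have hQP : Q * Pm e = μ • Pm e := by
    ext i j
    rw [Matrix.mul_apply]
    simp only [Pm, Matrix.vecMulVec_apply, Matrix.smul_apply, smul_eq_mul]
    have h1 : ∀ k, Q i k * (e k * e j) = (Q i k * e k) * e j := fun k => by ring
    rw [Finset.sum_congr rfl fun k _ => h1 k, ← Finset.sum_mul, hQec i]
    ring
  have hRQ : R * Q = Q * R := by
    rw [hRdef, Rm, Matrix.sub_mul, Matrix.add_mul, Matrix.mul_sub, Matrix.mul_add,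
      Matrix.one_mul, Matrix.mul_one, hPQ, hQP]
  set Λ' : Mat3 := R * Λ * R with hΛ'def
  have hΛ'sym : Λ'.IsSymm := by
    unfold Matrix.IsSymm
    rw [hΛ'def, Matrix.transpose_mul, Matrix.transpose_mul, hRsym.eq, hΛ.1.eq, ← mul_assoc]
  have hΛ'tr : Λ'.trace = 0 := by
    rw [hΛ'def, Matrix.trace_mul_comm (R * Λ) R, ← mul_assoc, hRR, one_mul, hΛ.2]
  have hmdot' : mdot Λ' Q = mdot Λ Q := by
    have h1 : Λ' * Q = R * ((Λ * Q) * R) := by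
      rw [hΛ'def]
      calc R * Λ * R * Q = R * Λ * (R * Q) := by rw [mul_assoc]
        _ = R * Λ * (Q * R) := by rw [hRQ]
        _ = R * ((Λ * Q) * R) := by noncomm_ring
    rw [mdot, mdot, h1, Matrix.trace_mul_comm, mul_assoc, hRR, mul_one]
  set Λ'' : Mat3 := (1/2 : ℝ) • (Λ + Λ') with hΛ''def
  have hΛ''sym0 : Sym0 Λ'' := by
    constructor
    · unfold Matrix.IsSymm
      rw [hΛ''def, Matrix.transpose_smul, Matrix.transpose_add, hΛ.1.eq, hΛ'sym.eq]
    · rw [hΛ''def, Matrix.trace_smul, Matrix.trace_add, hΛ.2, hΛ'tr]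
      simp
  have hmdot'' : mdot Λ'' Q = mdot Λ Q := by
    rw [mdot, hΛ''def, Matrix.smul_mul, Matrix.trace_smul, Matrix.add_mul, Matrix.trace_add]
    have h1 : (Λ' * Q).trace = (Λ * Q).trace := hmdot'
    rw [h1]
    rw [smul_eq_mul, mdot]
    ring
  have hqfhalf : ∀ p : V3, qf Λ'' p = (qf Λ p + qf Λ' p)/2 := by
    intro p
    rw [hΛ''def]
    simp only [qf, Matrix.smul_apply, Matrix.add_apply, smul_eq_mul, Fin.sum_univ_three]
    ring
  -- conjugation identities
  have hconjQ : R * Q * R = Q := by rw [hRQ, mul_assoc, hRR, mul_one]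
  have hQRv : ∀ p : V3, qf Q (Rv R p) = qf Q p := by
    intro p
    rw [show qf Q (Rv R p) = qf Q (R.mulVec p) from rfl, qf_mulVec Q R hRsym, hconjQ]
  have hwRv : ∀ p : V3, w (Rv R p) = w p := by
    intro p
    rw [hw]
    simp only
    rw [hQRv p]
  have hconjL : R * Λ' * R = Λ := by
    rw [hΛ'def]
    calc R * (R * Λ * R) * R = (R * R) * Λ * (R * R) := by noncomm_ring
      _ = Λ := by rw [hRR, one_mul, mul_one]
  have hΛ'Rv : ∀ p : V3, qf Λ' (Rv R p) = qf Λ p := by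
    intro p
    rw [show qf Λ' (Rv R p) = qf Λ' (R.mulVec p) from rfl, qf_mulVec Λ' R hRsym, hconjL]
  -- the integrals
  set a : ℝ := ∫ p, Real.exp (qf Λ p) * w p ∂μS with ha
  set b : ℝ := ∫ p, Real.exp (qf Λ' p) * w p ∂μS with hb
  set m : ℝ := ∫ p, Real.exp (qf Λ'' p) * w p ∂μS with hm
  have hDobΛ : Dob Q Λ η = mdot Λ Q - Real.log a := by rw [ha, hw]; rfl
  have hDobΛ'' : Dob Q Λ'' η = mdot Λ'' Q - Real.log m := by rw [hm, hw]; rfl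
  have hcontA : Continuous (fun p => Real.exp (qf Λ p) * w p) :=
    (Real.continuous_exp.comp (qf_cont Λ)).mul hwcont
  have hcontB : Continuous (fun p => Real.exp (qf Λ' p) * w p) :=
    (Real.continuous_exp.comp (qf_cont Λ')).mul hwcont
  have hcontM : Continuous (fun p => Real.exp (qf Λ'' p) * w p) :=
    (Real.continuous_exp.comp (qf_cont Λ'')).mul hwcont
  have hintA := integrable_cont hcontA
  have hintB := integrable_cont hcontB
  have hintM := integrable_cont hcontM
  have hwp₀ : 0 < w p₀ := lt_max_iff.2 (Or.inl (by linarith))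
  have hapos : 0 < a := by
    rw [ha]
    exact integral_pos hcontA (fun p => mul_nonneg (Real.exp_pos _).le (hwnn p)) hp₀s
      (mul_pos (Real.exp_pos _) hwp₀)
  have hmpos : 0 < m := by
    rw [hm]
    exact integral_pos hcontM (fun p => mul_nonneg (Real.exp_pos _).le (hwnn p)) hp₀s
      (mul_pos (Real.exp_pos _) hwp₀)
  have hba : b = a := by
    rw [hb, ha, ← integral_comp_Rv R hRsym hRR (fun p => Real.exp (qf Λ' p) * w p)]
    apply congrArg (fun F : V3 → ℝ => ∫ p, F p ∂μS)
    funext p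
    rw [hΛ'Rv p, hwRv p]
  have hmax'' := hmax Λ'' hΛ''sym0
  rw [hDobΛ'', hDobΛ, hmdot''] at hmax''
  have hloga : Real.log a ≤ Real.log m := by linarith
  have ham : a ≤ m := by
    calc a = Real.exp (Real.log a) := (Real.exp_log hapos).symm
      _ ≤ Real.exp (Real.log m) := Real.exp_le_exp.2 hloga
      _ = m := Real.exp_log hmpos
  -- f, g and the square trick
  set fb : V3 → ℝ := fun p => Real.exp (qf Λ p / 2) * Real.sqrt (w p) with hfb
  set gb : V3 → ℝ := fun p => Real.exp (qf Λ' p / 2) * Real.sqrt (w p) with hgb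
  have hfbc : Continuous fb := by
    rw [hfb]
    exact (Real.continuous_exp.comp ((qf_cont Λ).div_const 2)).mul
      (Real.continuous_sqrt.comp hwcont)
  have hgbc : Continuous gb := by
    rw [hgb]
    exact (Real.continuous_exp.comp ((qf_cont Λ').div_const 2)).mul
      (Real.continuous_sqrt.comp hwcont)
  have hpt : ∀ p : V3, (fb p - gb p)^2 =
      Real.exp (qf Λ p) * w p + Real.exp (qf Λ' p) * w p
        - 2 * (Real.exp (qf Λ'' p) * w p) := by
    intro p
    have hw0 : 0 ≤ w p := hwnn p
    have hsq : Real.sqrt (w p) ^ 2 = w p := Real.sq_sqrt hw0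
    have hf2 : fb p ^ 2 = Real.exp (qf Λ p) * w p := by
      rw [hfb]
      simp only
      rw [mul_pow, hsq, sq, ← Real.exp_add]
      ring_nf
    have hg2 : gb p ^ 2 = Real.exp (qf Λ' p) * w p := by
      rw [hgb]
      simp only
      rw [mul_pow, hsq, sq, ← Real.exp_add]
      ring_nf
    have h3 : fb p * gb p = Real.exp (qf Λ'' p) * w p := by
      rw [hfb, hgb]
      simp only
      rw [show Real.exp (qf Λ p / 2) * Real.sqrt (w p) *
          (Real.exp (qf Λ' p / 2) * Real.sqrt (w p))
        = (Real.exp (qf Λ p / 2) * Real.exp (qf Λ' p / 2))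
            * (Real.sqrt (w p) * Real.sqrt (w p)) from by ring]
      rw [← Real.exp_add, Real.mul_self_sqrt hw0, hqfhalf p]
      ring_nf
    linear_combination hf2 + hg2 - 2 * h3
  have hFcont : Continuous (fun p => (fb p - gb p)^2) := (hfbc.sub hgbc).pow 2
  have hFint : ∫ p, (fb p - gb p)^2 ∂μS = a + b - 2*m := by
    calc ∫ p, (fb p - gb p)^2 ∂μS
        = ∫ p, ((Real.exp (qf Λ p) * w p + Real.exp (qf Λ' p) * w p)
            - 2 * (Real.exp (qf Λ'' p) * w p)) ∂μS := by
          apply congrArg (fun F : V3 → ℝ => ∫ p, F p ∂μS)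
          funext p
          rw [hpt p]
      _ = (∫ p, (Real.exp (qf Λ p) * w p + Real.exp (qf Λ' p) * w p) ∂μS)
            - ∫ p, 2 * (Real.exp (qf Λ'' p) * w p) ∂μS :=
          integral_sub (hintA.add hintB) (hintM.const_mul 2)
      _ = ((∫ p, Real.exp (qf Λ p) * w p ∂μS) + ∫ p, Real.exp (qf Λ' p) * w p ∂μS)
            - 2 * ∫ p, Real.exp (qf Λ'' p) * w p ∂μS := by
          rw [integral_add hintA hintB, integral_const_mul]
      _ = a + b - 2*m := by rw [ha, hb, hm]
  have hFzero : ∫ p, (fb p - gb p)^2 ∂μS = 0 := by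
    apply le_antisymm
    · rw [hFint]; linarith
    · exact integral_nonneg fun p => sq_nonneg _
  have hfg : ∀ p ∈ sph, (fb p - gb p)^2 = 0 :=
    cont_eq_zero_of_integral_zero hFcont (fun p => sq_nonneg _) hFzero
  -- the quadratic forms agree on the good part of the sphere
  have hqfB : ∀ p : V3, p ∈ sph → η < qf Q p → qf (Λ - Λ') p = 0 := by
    intro p hps hqp
    have h0 : fb p = gb p := by
      have := hfg p hps
      have h1 : fb p - gb p = 0 := by
        have := sq_eq_zero_iff.1 this
        exact this
      linarith
    have hwpos : 0 < w p := lt_max_iff.2 (Or.inl (by linarith))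
    have hsqp : 0 < Real.sqrt (w p) := Real.sqrt_pos.2 hwpos
    have hexp : Real.exp (qf Λ p / 2) = Real.exp (qf Λ' p / 2) := by
      rw [hfb, hgb] at h0
      simp only at h0
      exact mul_right_cancel₀ (ne_of_gt hsqp) h0
    have heq : qf Λ p = qf Λ' p := by
      have := Real.exp_eq_exp.1 hexp
      linarith
    have hsub : qf (Λ - Λ') p = qf Λ p - qf Λ' p := by
      simp only [qf, Matrix.sub_apply, Fin.sum_univ_three]
      ring
    rw [hsub, heq, sub_self]
  have hBsym : (Λ - Λ').IsSymm := by
    unfold Matrix.IsSymm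
    rw [Matrix.transpose_sub, hΛ.1.eq, hΛ'sym.eq]
  have hB0 : Λ - Λ' = 0 := quad_zero (Λ - Λ') Q η hBsym hp₀s hp₀q hqfB
  have hΛeq : Λ = R * Λ * R := (sub_eq_zero.1 hB0).trans hΛ'def
  -- conclude
  have hRe : R *ᵥ e = e := Rm_mulVec_e e hsum
  have hyeq : Λ *ᵥ e = R *ᵥ (Λ *ᵥ e) := by
    have h1 : R *ᵥ (Λ *ᵥ e) = R *ᵥ (Λ *ᵥ (R *ᵥ e)) := by rw [hRe]
    rw [h1]
    simp only [Matrix.mulVec_mulVec]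
    rw [← mul_assoc, ← hΛeq]
  refine ⟨e ⬝ᵥ (Λ *ᵥ e), ?_⟩
  have hRy : R *ᵥ (Λ *ᵥ e) = (e ⬝ᵥ (Λ *ᵥ e)) • e + (e ⬝ᵥ (Λ *ᵥ e)) • e - (Λ *ᵥ e) := by
    rw [hRdef, Rm, Matrix.sub_mulVec, Matrix.add_mulVec, Pm_mulVec, Matrix.one_mulVec]
  funext i
  have h1 := congrFun hyeq i
  have h2 := congrFun hRy i
  simp only [Pi.add_apply, Pi.sub_apply, Pi.smul_apply, smul_eq_mul] at h1 h2
  rw [h2] at h1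
  show (Λ *ᵥ e) i = (e ⬝ᵥ (Λ *ᵥ e)) * e i
  linarith
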